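/- The equations of motion 𝒴̇_i = [𝒲, 𝒵_i] + [λ_i 𝒲 + Σ_k 𝒴_k, 𝒴_i] and 𝒵̇_i = [λ_i 𝒲 + Σ_k 𝒴_k, 𝒵_i] (i = 1,…,N) are equivalent to the Lax equation 𝓛̇(λ) = [𝓛(λ), 𝓜(λ)] holding identically in λ, where 𝓛(λ) = 𝒲 + Σ_i [ 𝒴_i/(λ−λ_i) + 𝒵_i/(λ−λ_i)² ] and 𝓜(λ) = Σ_i (1/(λ−λ_i)) [ λ_i 𝒴_i + λ 𝒵_i/(λ−λ_i) ]. -/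

import Mathlib

open Matrix Complex

set_option maxHeartbeats 1000000

noncomputable section

/-- `σ³ = (i/2)σ_z`. -/
def sigma3 : Matrix (Fin 2) (Fin 2) ℂ := (1 / 2 : ℂ) • !![I, 0; 0, -I]

/-- The Lax matrix `𝓛(λ) = 𝒲 + Σ_i [ 𝒴_i/(λ−λ_i) + 𝒵_i/(λ−λ_i)² ]`. -/
def laxL {N : ℕ} (w : ℝ) (lam : Fin N → ℂ) (Y Z : Fin N → Matrix (Fin 2) (Fin 2) ℂ)
    (l : ℂ) : Matrix (Fin 2) (Fin 2) ℂ :=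
  (w : ℂ) • sigma3 + ∑ i : Fin N, ((l - lam i)⁻¹ • Y i + ((l - lam i) ^ 2)⁻¹ • Z i)

/-- The matrix `𝓜(λ) = Σ_i (λ−λ_i)⁻¹ [ λ_i 𝒴_i + λ 𝒵_i/(λ−λ_i) ]`. -/
def laxM {N : ℕ} (lam : Fin N → ℂ) (Y Z : Fin N → Matrix (Fin 2) (Fin 2) ℂ)
    (l : ℂ) : Matrix (Fin 2) (Fin 2) ℂ :=
  ∑ i : Fin N, (l - lam i)⁻¹ • (lam i • Y i + (l * (l - lam i)⁻¹) • Z i)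

open Finset Filter Topology in
private lemma sum_double_antisym {N : ℕ} (D : Fin N → Fin N → Matrix (Fin 2) (Fin 2) ℂ)
    (hD : ∀ i j, D i j + D j i = 0) : ∑ i, ∑ j, D i j = 0 := by
  have h2 : (2:ℂ) • (∑ i : Fin N, ∑ j : Fin N, D i j) = 0 := by
    rw [two_smul]
    nth_rewrite 2 [Finset.sum_comm]
    rw [← Finset.sum_add_distrib]
    refine Finset.sum_eq_zero fun i _ => ?_
    rw [← Finset.sum_add_distrib]
    exact Finset.sum_eq_zero fun j _ => hD i j
  rcases smul_eq_zero.mp h2 with h | h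
  · exact absurd h two_ne_zero
  · exact h


lemma expand_comm {M : Type*} [Ring M] {N : ℕ} (C : M) (P m : Fin N → M) :
    (C + ∑ i : Fin N, P i) * (∑ j : Fin N, m j) - (∑ j : Fin N, m j) * (C + ∑ i : Fin N, P i)
      = (∑ j : Fin N, (C * m j - m j * C)) + ∑ i : Fin N, ∑ j : Fin N, (P i * m j - m j * P i) := by
  simp only [Finset.mul_sum, Finset.sum_mul, add_mul, mul_add, Finset.sum_sub_distrib,
    Finset.sum_add_distrib]
  rw [show (∑ x : Fin N, ∑ i : Fin N, P i * m x) = ∑ x : Fin N, ∑ i : Fin N, P x * m i from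
    Finset.sum_comm]
  abel

lemma key_identity {N : ℕ} (w : ℝ) (lam : Fin N → ℂ)
    (Y Z : Fin N → Matrix (Fin 2) (Fin 2) ℂ) (l : ℂ) (hl : ∀ i, l ≠ lam i) :
    laxL w lam Y Z l * laxM lam Y Z l - laxM lam Y Z l * laxL w lam Y Z l
      = ∑ i : Fin N,
          ((l - lam i)⁻¹ • (((w : ℂ) • sigma3 * Z i - Z i * (w : ℂ) • sigma3)
              + ((lam i • ((w : ℂ) • sigma3) + ∑ k : Fin N, Y k) * Y i
                - Y i * (lam i • ((w : ℂ) • sigma3) + ∑ k : Fin N, Y k)))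
            + ((l - lam i) ^ 2)⁻¹ • ((lam i • ((w : ℂ) • sigma3) + ∑ k : Fin N, Y k) * Z i
                - Z i * (lam i • ((w : ℂ) • sigma3) + ∑ k : Fin N, Y k))) := by
  have hne : ∀ i, l - lam i ≠ 0 := fun i => sub_ne_zero.mpr (hl i)
  set C : Matrix (Fin 2) (Fin 2) ℂ := (w : ℂ) • sigma3 with hC
  set SY : Matrix (Fin 2) (Fin 2) ℂ := ∑ k, Y k with hSY
  set P : Fin N → Matrix (Fin 2) (Fin 2) ℂ :=
    fun i => (l - lam i)⁻¹ • Y i + ((l - lam i) ^ 2)⁻¹ • Z i with hP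
  set m : Fin N → Matrix (Fin 2) (Fin 2) ℂ :=
    fun j => (l - lam j)⁻¹ • (lam j • Y j + (l * (l - lam j)⁻¹) • Z j) with hm
  set G : Fin N → Fin N → Matrix (Fin 2) (Fin 2) ℂ :=
    fun i j => (l - lam j)⁻¹ • (Y i * Y j - Y j * Y i)
      + ((l - lam j) ^ 2)⁻¹ • (Y i * Z j - Z j * Y i) with hG
  have hexp : laxL w lam Y Z l * laxM lam Y Z l - laxM lam Y Z l * laxL w lam Y Z l
      = (∑ j, (C * m j - m j * C)) + ∑ i, ∑ j, (P i * m j - m j * P i) := by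
    have hL : laxL w lam Y Z l = C + ∑ i, P i := rfl
    have hM : laxM lam Y Z l = ∑ j, m j := rfl
    rw [hL, hM, expand_comm]
  have claimA : ∀ j, ((l - lam j)⁻¹ • ((C * Z j - Z j * C)
        + ((lam j • C + SY) * Y j - Y j * (lam j • C + SY)))
      + ((l - lam j) ^ 2)⁻¹ • ((lam j • C + SY) * Z j - Z j * (lam j • C + SY)))
      = (C * m j - m j * C) + ((l - lam j)⁻¹ • (SY * Y j - Y j * SY)
          + ((l - lam j) ^ 2)⁻¹ • (SY * Z j - Z j * SY)) := by
    intro j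
    have h1 := hne j
    simp only [hm, add_mul, mul_add, smul_mul_assoc, mul_smul_comm, smul_add, smul_sub,
      sub_mul, mul_sub, smul_smul]
    match_scalars <;> (field_simp; try ring)
  have hsym : ∀ i j, ((P i * m j - m j * P i) - G i j) + ((P j * m i - m i * P j) - G j i) = 0 := by
    intro i j
    have h1 := hne i
    have h2 := hne j
    simp only [hm, hP, hG, add_mul, mul_add, smul_mul_assoc, mul_smul_comm, smul_add,
      smul_sub, sub_mul, mul_sub, smul_smul]
    match_scalars <;> (field_simp; try ring)
  have hdouble : ∑ i, ∑ j, (P i * m j - m j * P i) = ∑ i, ∑ j, G i j := by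
    rw [← sub_eq_zero, ← Finset.sum_sub_distrib]
    simp only [← Finset.sum_sub_distrib]
    exact sum_double_antisym _ hsym
  have hTy : ∀ j, ∑ i, G i j = (l - lam j)⁻¹ • (SY * Y j - Y j * SY)
      + ((l - lam j) ^ 2)⁻¹ • (SY * Z j - Z j * SY) := by
    intro j
    rw [hSY]
    simp only [hG, Finset.sum_mul, Finset.mul_sum, smul_sub, Finset.smul_sum,
      ← Finset.sum_sub_distrib, ← Finset.sum_add_distrib]
  rw [hexp, hdouble, Finset.sum_comm]
  rw [← Finset.sum_add_distrib]
  refine (Finset.sum_congr rfl fun j _ => ?_).symm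
  rw [claimA j, hTy j]

open Finset Filter Topology in
private lemma vanish {N : ℕ} (lam : Fin N → ℂ) (hlam : Function.Injective lam) (a b : Fin N → ℂ)
    (h : ∀ l : ℂ, (∀ i, l ≠ lam i) →
      ∑ i : Fin N, ((l - lam i)⁻¹ * a i + ((l - lam i) ^ 2)⁻¹ * b i) = 0)
    (j : Fin N) : a j = 0 ∧ b j = 0 := by
  set F := 𝓝[≠] (lam j) with hF
  set f : ℂ → ℂ := fun l => ∑ i : Fin N, ((l - lam i)⁻¹ * a i + ((l - lam i) ^ 2)⁻¹ * b i)
    with hf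
  have hevU : ∀ᶠ l in F, ∀ i, l ≠ lam i := by
    have h1 : ∀ᶠ l in 𝓝 (lam j), ∀ i ∈ Finset.univ.erase j, l ≠ lam i := by
      rw [eventually_all_finset]
      intro i hi
      exact eventually_ne_nhds fun hh => (Finset.mem_erase.mp hi).1 (hlam hh).symm
    have h2 : ∀ᶠ l in F, l ≠ lam j := self_mem_nhdsWithin
    filter_upwards [h1.filter_mono nhdsWithin_le_nhds, h2] with l hl1 hl2 i
    by_cases hij : i = j
    · rw [hij]; exact hl2
    · exact hl1 i (Finset.mem_erase.mpr ⟨hij, Finset.mem_univ i⟩)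
  have hf0 : ∀ᶠ l in F, f l = 0 := hevU.mono fun l hl => h l hl
  -- generic per-index limit of (l - lam j)^... times a term, for i ≠ j
  have hcont : ∀ (p : ℕ) (i : Fin N), i ≠ j →
      Tendsto (fun l => (l - lam j) ^ p * ((l - lam i)⁻¹ * a i + ((l - lam i) ^ 2)⁻¹ * b i))
        F (𝓝 (((lam j : ℂ) - lam j) ^ p * ((lam j - lam i)⁻¹ * a i
            + ((lam j - lam i) ^ 2)⁻¹ * b i))) := by
    intro p i hij
    have hne : (lam j : ℂ) - lam i ≠ 0 := sub_ne_zero.mpr fun hh => hij (hlam hh).symm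
    have : ContinuousAt (fun l : ℂ =>
        (l - lam j) ^ p * ((l - lam i)⁻¹ * a i + ((l - lam i) ^ 2)⁻¹ * b i)) (lam j) :=
      (((continuousAt_id.sub continuousAt_const).pow p).mul
        ((((continuousAt_id.sub continuousAt_const).inv₀ hne).mul continuousAt_const).add
          ((((continuousAt_id.sub continuousAt_const).pow 2).inv₀
            (pow_ne_zero 2 hne)).mul continuousAt_const)))
    exact this.tendsto.mono_left nhdsWithin_le_nhds
  have hzero : ∀ p : ℕ, 0 < p → Tendsto (fun l => (l - lam j) ^ p * f l) F (𝓝 0) := by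
    intro p _
    refine tendsto_const_nhds.congr' ?_
    filter_upwards [hf0] with l hl
    rw [hl, mul_zero]
  have hbj : b j = 0 := by
    have t1 : Tendsto (fun l => (l - lam j) ^ 2 * f l) F (𝓝 (b j)) := by
      have hterm : ∀ i : Fin N,
          Tendsto (fun l => (l - lam j) ^ 2 * ((l - lam i)⁻¹ * a i + ((l - lam i) ^ 2)⁻¹ * b i))
            F (𝓝 (if i = j then b j else 0)) := by
        intro i
        by_cases hij : i = j
        · subst hij
          simp only [if_pos rfl]
          have heq : ∀ᶠ l in F,
              (l - lam i) * a i + b i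
                = (l - lam i) ^ 2 * ((l - lam i)⁻¹ * a i + ((l - lam i) ^ 2)⁻¹ * b i) := by
            filter_upwards [self_mem_nhdsWithin] with l hl
            have hne : l - lam i ≠ 0 := sub_ne_zero.mpr hl
            field_simp
          refine Tendsto.congr' heq ?_
          have : ContinuousAt (fun l : ℂ => (l - lam i) * a i + b i) (lam i) :=
            ((continuousAt_id.sub continuousAt_const).mul continuousAt_const).add
              continuousAt_const
          have h3 : Tendsto (fun l : ℂ => (l - lam i) * a i + b i) F
              (𝓝 ((lam i - lam i) * a i + b i)) :=
            this.tendsto.mono_left nhdsWithin_le_nhds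
          simpa using h3
        · simp only [if_neg hij]
          have h3 := hcont 2 i hij
          simpa using h3
      have hsum := tendsto_finset_sum Finset.univ (fun i _ => hterm i)
      simp only [Finset.sum_ite_eq' Finset.univ j, Finset.mem_univ, if_pos] at hsum
      refine hsum.congr fun l => ?_
      rw [hf, Finset.mul_sum]
    exact (tendsto_nhds_unique (hzero 2 two_pos) t1).symm
  have haj : a j = 0 := by
    have t1 : Tendsto (fun l => (l - lam j) ^ 1 * f l) F (𝓝 (a j)) := by
      have hterm : ∀ i : Fin N,
          Tendsto (fun l => (l - lam j) ^ 1 * ((l - lam i)⁻¹ * a i + ((l - lam i) ^ 2)⁻¹ * b i))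
            F (𝓝 (if i = j then a j else 0)) := by
        intro i
        by_cases hij : i = j
        · subst hij
          simp only [if_pos rfl]
          have heq : ∀ᶠ l in F,
              (a i : ℂ)
                = (l - lam i) ^ 1 * ((l - lam i)⁻¹ * a i + ((l - lam i) ^ 2)⁻¹ * b i) := by
            filter_upwards [self_mem_nhdsWithin] with l hl
            have hne : l - lam i ≠ 0 := sub_ne_zero.mpr hl
            rw [hbj]
            field_simp
            ring
          exact Tendsto.congr' heq tendsto_const_nhds
        · simp only [if_neg hij]
          have h3 := hcont 1 i hij
          simpa using h3
      have hsum := tendsto_finset_sum Finset.univ (fun i _ => hterm i)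
      simp only [Finset.sum_ite_eq' Finset.univ j, Finset.mem_univ, if_pos] at hsum
      refine hsum.congr fun l => ?_
      rw [hf, Finset.mul_sum]
    exact (tendsto_nhds_unique (hzero 1 one_pos) t1).symm
  exact ⟨haj, hbj⟩

/-- The equations of motion `𝒴̇_i = [𝒲, 𝒵_i] + [λ_i 𝒲 + Σ_k 𝒴_k, 𝒴_i]`,
`𝒵̇_i = [λ_i 𝒲 + Σ_k 𝒴_k, 𝒵_i]` are equivalent to the Lax equation
`𝓛̇(λ) = [𝓛(λ), 𝓜(λ)]` holding identically in `λ ∉ {λ_1,…,λ_N}`. -/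
theorem lax_equation_equiv {N : ℕ} (w : ℝ) (lam : Fin N → ℂ)
    (hlam : Function.Injective lam)
    (Y Z Y' Z' : Fin N → ℝ → Matrix (Fin 2) (Fin 2) ℂ)
    (hY : ∀ i t a b, HasDerivAt (fun s => Y i s a b) (Y' i t a b) t)
    (hZ : ∀ i t a b, HasDerivAt (fun s => Z i s a b) (Z' i t a b) t)
    (t : ℝ) :
    (∀ i : Fin N,
        Y' i t = ((w : ℂ) • sigma3 * Z i t - Z i t * (w : ℂ) • sigma3)
          + ((lam i • ((w : ℂ) • sigma3) + ∑ k : Fin N, Y k t) * Y i t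
            - Y i t * (lam i • ((w : ℂ) • sigma3) + ∑ k : Fin N, Y k t)) ∧
        Z' i t = ((lam i • ((w : ℂ) • sigma3) + ∑ k : Fin N, Y k t) * Z i t
          - Z i t * (lam i • ((w : ℂ) • sigma3) + ∑ k : Fin N, Y k t)))
    ↔
    (∀ l : ℂ, (∀ i, l ≠ lam i) →
        (∑ i : Fin N, ((l - lam i)⁻¹ • Y' i t + ((l - lam i) ^ 2)⁻¹ • Z' i t))
          = laxL w lam (fun i => Y i t) (fun i => Z i t) l
              * laxM lam (fun i => Y i t) (fun i => Z i t) l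
            - laxM lam (fun i => Y i t) (fun i => Z i t) l
              * laxL w lam (fun i => Y i t) (fun i => Z i t) l) := by
  set RY : Fin N → Matrix (Fin 2) (Fin 2) ℂ := fun i =>
    ((w : ℂ) • sigma3 * Z i t - Z i t * (w : ℂ) • sigma3)
      + ((lam i • ((w : ℂ) • sigma3) + ∑ k : Fin N, Y k t) * Y i t
        - Y i t * (lam i • ((w : ℂ) • sigma3) + ∑ k : Fin N, Y k t)) with hRY
  set RZ : Fin N → Matrix (Fin 2) (Fin 2) ℂ := fun i =>
    ((lam i • ((w : ℂ) • sigma3) + ∑ k : Fin N, Y k t) * Z i t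
      - Z i t * (lam i • ((w : ℂ) • sigma3) + ∑ k : Fin N, Y k t)) with hRZ
  have hkey : ∀ (l : ℂ), (∀ i, l ≠ lam i) →
      laxL w lam (fun i => Y i t) (fun i => Z i t) l
          * laxM lam (fun i => Y i t) (fun i => Z i t) l
        - laxM lam (fun i => Y i t) (fun i => Z i t) l
          * laxL w lam (fun i => Y i t) (fun i => Z i t) l
        = ∑ i : Fin N, ((l - lam i)⁻¹ • RY i + ((l - lam i) ^ 2)⁻¹ • RZ i) := by
    intro l hl
    exact key_identity w lam (fun i => Y i t) (fun i => Z i t) l hl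
  constructor
  · intro hEOM l hl
    rw [hkey l hl]
    exact Finset.sum_congr rfl fun i _ => by rw [(hEOM i).1, (hEOM i).2]
  · intro hLax i
    have hsum : ∀ (l : ℂ), (∀ k, l ≠ lam k) →
        ∑ k : Fin N, ((l - lam k)⁻¹ • (Y' k t - RY k)
          + ((l - lam k) ^ 2)⁻¹ • (Z' k t - RZ k)) = 0 := by
      intro l hl
      have h1 := hLax l hl
      rw [hkey l hl] at h1
      have h2 : ∑ k : Fin N, ((l - lam k)⁻¹ • (Y' k t - RY k)
            + ((l - lam k) ^ 2)⁻¹ • (Z' k t - RZ k))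
          = (∑ k : Fin N, ((l - lam k)⁻¹ • Y' k t + ((l - lam k) ^ 2)⁻¹ • Z' k t))
            - ∑ k : Fin N, ((l - lam k)⁻¹ • RY k + ((l - lam k) ^ 2)⁻¹ • RZ k) := by
        rw [← Finset.sum_sub_distrib]
        refine Finset.sum_congr rfl fun k _ => ?_
        simp only [smul_sub]
        abel
      rw [h2, h1, sub_self]
    have hAB : ∀ p q : Fin 2, (Y' i t - RY i) p q = 0 ∧ (Z' i t - RZ i) p q = 0 := by
      intro p q
      refine vanish lam hlam (fun k => (Y' k t - RY k) p q)
        (fun k => (Z' k t - RZ k) p q) ?_ i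
      intro l hl
      have h3 := congrArg (fun A : Matrix (Fin 2) (Fin 2) ℂ => A p q) (hsum l hl)
      simpa [Matrix.sum_apply, Matrix.add_apply, Matrix.sub_apply, Matrix.smul_apply,
        smul_eq_mul] using h3
    constructor
    · ext p q
      have := (hAB p q).1
      rw [Matrix.sub_apply, sub_eq_zero] at this
      exact this
    · ext p q
      have := (hAB p q).2
      rw [Matrix.sub_apply, sub_eq_zero] at this
      exact this
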